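/- For the pair (A_{2n−1}, C_n) with n odd arising from the order-2 diagram automorphism of sl_{2n}, the weight p(ρ) is not in the root lattice of C_n; moreover, setting μ = (2n−1)ϖ₁ (with ϖ₁ the first fundamental weight of C_n), the difference p(ρ) − μ is a non-negative integral combination of positive short roots of C_n, yet p(ρ) − μ is not of the form p(ρ) − ρ₀ − sum(Ψ) for any subset Ψ of the positive short roots; hence V₀(p(ρ)−ρ₀)_{μ−ρ₀} = 0. -/

import Mathlib

open scoped InnerProductSpace
open Finset

noncomputable section

variable {E : Type*} [NormedAddCommGroup E] [InnerProductSpace ℝ E]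

/-- Reflection in the hyperplane orthogonal to `α`. -/
def rsRefl (α v : E) : E := v - ((2 * inner ℝ v α / inner ℝ α α : ℝ)) • α

/-- Axioms for a (reduced, crystallographic) root system in a Euclidean space. -/
def IsRootSystem (Φ : Finset E) : Prop :=
  Φ.Nonempty ∧ (∀ α ∈ Φ, α ≠ 0) ∧ (∀ α ∈ Φ, ∀ β ∈ Φ, rsRefl α β ∈ Φ) ∧
  (∀ α ∈ Φ, ∀ β ∈ Φ, ∃ n : ℤ, (2 * inner ℝ β α / inner ℝ α α : ℝ) = n) ∧
  (∀ α ∈ Φ, ∀ t : ℝ, t • α ∈ Φ → t = 1 ∨ t = -1)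

/-- `pos` is a system of positive roots of `Φ`, cut out by a linear functional. -/
def IsPositiveSystem (Φ pos : Finset E) : Prop :=
  ∃ f : E →ₗ[ℝ] ℝ, (∀ α ∈ Φ, f α ≠ 0) ∧ pos = Φ.filter fun α => 0 < f α

/-- Irreducibility: no nontrivial orthogonal decomposition of the set of roots. -/
def RSIrreducible (Φ : Finset E) : Prop :=
  ∀ S ⊆ Φ, (∀ α ∈ S, ∀ β ∈ Φ, β ∉ S → (inner ℝ α β : ℝ) = 0) → S = ∅ ∨ S = Φ

/-- `Φ` has exactly two root lengths `s < l` (short and long). -/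
def TwoLengths (Φ : Finset E) (s l : ℝ) : Prop :=
  0 < s ∧ s < l ∧ (∀ α ∈ Φ, ‖α‖ = s ∨ ‖α‖ = l) ∧ (∃ α ∈ Φ, ‖α‖ = s) ∧ (∃ α ∈ Φ, ‖α‖ = l)

open scoped Classical in
/-- The simple roots of a positive system: the indecomposable positive roots. -/
def simples (pos : Finset E) : Finset E :=
  pos.filter fun α => ∀ β ∈ pos, ∀ γ ∈ pos, α ≠ β + γ

/-- Half sum of a finite set of vectors. -/
def halfSum (pos : Finset E) : E := (2:ℝ)⁻¹ • ∑ β ∈ pos, β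

open scoped Classical in
/-- The elements of a given length `s` (e.g. the short roots). -/
def ofLength (Φ : Finset E) (s : ℝ) : Finset E := Φ.filter fun α => ‖α‖ = s

/-- The Weyl group: the group generated by the reflections in the roots. -/
def weylGroup (Φ : Finset E) : Subgroup (E ≃ₗ[ℝ] E) :=
  Subgroup.closure {g | ∃ α ∈ Φ, ∀ v, g v = rsRefl α v}

def weylOrbit (Φ : Finset E) (lam : E) : Set E := {v | ∃ g ∈ weylGroup Φ, g lam = v}

/-- `β` is a weight of the irreducible finite-dimensional representation with
(dominant) highest weight `lam` of the semisimple Lie algebra with root system `Φ`: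
by the standard characterisation this holds iff `β` lies in the convex hull of the
Weyl orbit of `lam` and `lam - β` lies in the root lattice. -/
def isWeight (Φ : Finset E) (lam β : E) : Prop :=
  β ∈ convexHull ℝ (weylOrbit Φ lam) ∧ lam - β ∈ AddSubgroup.closure (Φ : Set E)

/-- The orthogonal projection onto the fixed space of an order-`m` isometry,
realising the restriction map `p : h* → h₀*` of the folding setup. -/
def foldProj (θ : E ≃ₗᵢ[ℝ] E) (m : ℕ) : E → E :=
  fun v => (m : ℝ)⁻¹ • ∑ i ∈ Finset.range m, (⇑θ)^[i] v

/-- Formal exponential `e^v` in the group algebra of the weight space. -/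
def fe (v : E) : AddMonoidAlgebra ℝ E := AddMonoidAlgebra.single v 1

end

open scoped Classical in
/-- Image of a set of roots under the folding projection. -/
noncomputable def folded {E : Type*} [NormedAddCommGroup E] [InnerProductSpace ℝ E]
    (θ : E ≃ₗᵢ[ℝ] E) (m : ℕ) (Φ : Finset E) : Finset E := Φ.image (foldProj θ m)


noncomputable section
open Finset

/-- The standard basis vector `e_i` of `ℝⁿ`. -/
def eps (n : ℕ) (i : Fin n) : EuclideanSpace ℝ (Fin n) := EuclideanSpace.single i 1

open scoped Classical in
/-- The positive short roots `e_i - e_j`, `e_i + e_j` (`i < j`) of the root system `Cₙ`. -/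
def CnShortPos (n : ℕ) : Finset (EuclideanSpace ℝ (Fin n)) :=
  ((univ ×ˢ univ).filter fun p : Fin n × Fin n => p.1 < p.2).image
      (fun p => eps n p.1 - eps n p.2) ∪
    ((univ ×ˢ univ).filter fun p : Fin n × Fin n => p.1 < p.2).image
      (fun p => eps n p.1 + eps n p.2)

open scoped Classical in
/-- The positive long roots `2e_i` of `Cₙ`. -/
def CnLongPos (n : ℕ) : Finset (EuclideanSpace ℝ (Fin n)) :=
  univ.image fun i : Fin n => (2 : ℝ) • eps n i

open scoped Classical in
/-- The positive roots of `Cₙ`. -/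
def CnPos (n : ℕ) : Finset (EuclideanSpace ℝ (Fin n)) := CnShortPos n ∪ CnLongPos n

open scoped Classical in
/-- The root system `Cₙ`. -/
def CnRoots (n : ℕ) : Finset (EuclideanSpace ℝ (Fin n)) :=
  CnPos n ∪ (CnPos n).image fun v => -v

/-- `p(ρ) = (2n-1, 2n-3, …, 1)`: the restriction to `h₀` of the half sum of positive
roots of `A_{2n-1}` under the order-2 diagram automorphism folding `sl_{2n}` to `sp_{2n}`. -/
def pRhoC (n : ℕ) : EuclideanSpace ℝ (Fin n) :=
  ∑ i : Fin n, ((2 * (n : ℝ)) - 1 - 2 * (i : ℕ)) • eps n i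

/-- `ρ₀ = (n, n-1, …, 1)`: the half sum of positive roots of `Cₙ`. -/
def rhoC (n : ℕ) : EuclideanSpace ℝ (Fin n) :=
  ∑ i : Fin n, ((n : ℝ) - (i : ℕ)) • eps n i


-- ### Auxiliary lemmas ###

lemma mem_shortPos_iff {n : ℕ} {α : EuclideanSpace ℝ (Fin n)} :
    α ∈ CnShortPos n ↔ ∃ p q : Fin n, p < q ∧
      (α = eps n p - eps n q ∨ α = eps n p + eps n q) := by
  classical
  simp only [CnShortPos, mem_union, mem_image, mem_filter, mem_product, Prod.exists]
  constructor
  · rintro (⟨p, q, ⟨⟨_, _⟩, h⟩, rfl⟩ | ⟨p, q, ⟨⟨_, _⟩, h⟩, rfl⟩)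
    · exact ⟨p, q, h, Or.inl rfl⟩
    · exact ⟨p, q, h, Or.inr rfl⟩
  · rintro ⟨p, q, h, (rfl | rfl)⟩
    · exact Or.inl ⟨p, q, ⟨⟨mem_univ _, mem_univ _⟩, h⟩, rfl⟩
    · exact Or.inr ⟨p, q, ⟨⟨mem_univ _, mem_univ _⟩, h⟩, rfl⟩

def coordSum (n : ℕ) : EuclideanSpace ℝ (Fin n) →+ ℝ where
  toFun x := ∑ i, x i
  map_zero' := by simp
  map_add' x y := by simpa using Finset.sum_add_distrib

lemma coordSum_eps (n : ℕ) (i : Fin n) : coordSum n (eps n i) = 1 := by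
  simp [coordSum, eps, EuclideanSpace.single_apply]

lemma coordSum_root_even {n : ℕ} {α : EuclideanSpace ℝ (Fin n)} (hα : α ∈ CnRoots n) :
    coordSum n α ∈ AddSubgroup.zmultiples (2:ℝ) := by
  classical
  have hpos : ∀ β ∈ CnPos n, coordSum n β ∈ AddSubgroup.zmultiples (2:ℝ) := by
    intro β hβ
    rcases Finset.mem_union.mp hβ with hs | hl
    · rcases mem_shortPos_iff.mp hs with ⟨p, q, _, (rfl | rfl)⟩
      · rw [map_sub, coordSum_eps, coordSum_eps]
        exact ⟨0, by norm_num⟩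
      · rw [map_add, coordSum_eps, coordSum_eps]
        exact ⟨1, by norm_num⟩
    · rcases Finset.mem_image.mp hl with ⟨i, _, rfl⟩
      have : coordSum n ((2:ℝ) • eps n i) = 2 := by
        simp [coordSum, eps, PiLp.smul_apply, smul_eq_mul, EuclideanSpace.single_apply,
          mul_ite, Finset.sum_ite_eq']
      rw [this]; exact ⟨1, by norm_num⟩
  rcases Finset.mem_union.mp hα with h | h
  · exact hpos _ h
  · rcases Finset.mem_image.mp h with ⟨β, hβ, rfl⟩
    rw [map_neg]
    exact neg_mem (hpos _ hβ)


lemma sum_odds (n : ℕ) : ∑ j ∈ Finset.range n, (2*j+1) = n^2 := by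
  induction n with
  | zero => simp
  | succ m ih => rw [Finset.sum_range_succ, ih]; ring

lemma part1 (n : ℕ) (hodd : Odd n) :
    pRhoC n ∉ AddSubgroup.closure ((CnRoots n : Finset (EuclideanSpace ℝ (Fin n))) :
        Set (EuclideanSpace ℝ (Fin n))) := by
  intro hmem
  have hle : AddSubgroup.closure ((CnRoots n : Finset (EuclideanSpace ℝ (Fin n))) :
      Set (EuclideanSpace ℝ (Fin n))) ≤ (AddSubgroup.zmultiples (2:ℝ)).comap (coordSum n) := by
    rw [AddSubgroup.closure_le]
    intro α hα
    exact coordSum_root_even (by exact_mod_cast hα)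
  have h2 : coordSum n (pRhoC n) ∈ AddSubgroup.zmultiples (2:ℝ) := hle hmem
  have hval : coordSum n (pRhoC n) = ((n^2 : ℕ) : ℝ) := by
    have h1 : coordSum n (pRhoC n) = ∑ i : Fin n, ((2 * (n : ℝ)) - 1 - 2 * (i : ℕ)) := by
      rw [pRhoC, map_sum]
      refine Finset.sum_congr rfl fun i _ => ?_
      have : coordSum n (((2 * (n : ℝ)) - 1 - 2 * (i : ℕ)) • eps n i)
          = ((2 * (n : ℝ)) - 1 - 2 * (i : ℕ)) * coordSum n (eps n i) := by
        simp [coordSum, Finset.mul_sum]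
      rw [this, coordSum_eps, mul_one]
    rw [h1, Fin.sum_univ_eq_sum_range (fun i => ((2 * (n : ℝ)) - 1 - 2 * (i : ℕ)))]
    have h2 : ∀ i ∈ Finset.range n, ((2 * (n : ℝ)) - 1 - 2 * (i : ℕ))
        = ((2*(n-1-i)+1 : ℕ) : ℝ) := by
      intro i hi
      have hi' : i < n := Finset.mem_range.mp hi
      have : (((n-1-i) : ℕ) : ℝ) = (n:ℝ) - 1 - i := by
        have h3 : n - 1 - i = n - (1 + i) := by omega
        rw [h3, Nat.cast_sub (by omega)]
        push_cast; ring
      push_cast [this]; ring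
    rw [Finset.sum_congr rfl h2, ← Nat.cast_sum]
    congr 1
    calc ∑ i ∈ Finset.range n, (2*(n-1-i)+1)
        = ∑ i ∈ Finset.range n, (2*i+1) := Finset.sum_range_reflect (fun j => 2*j+1) n
      _ = n^2 := sum_odds n
  rw [hval] at h2
  rcases h2 with ⟨k, hk⟩
  have hk' : (k:ℝ) * 2 = ((n^2 : ℕ) : ℝ) := by rw [← hk]; simp [zsmul_eq_mul]
  have h3 : ((2*k : ℤ) : ℝ) = ((n^2 : ℕ) : ℝ) := by push_cast at hk' ⊢; linarith
  have h4 : (2*k : ℤ) = ((n^2 : ℕ) : ℤ) := by exact_mod_cast h3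
  obtain ⟨m, hm⟩ := (hodd.pow : Odd (n^2))
  have : ((n^2 : ℕ) : ℤ) = 2*m+1 := by exact_mod_cast hm
  omega

lemma eps_apply (n : ℕ) (i j : Fin n) : eps n i j = if j = i then 1 else 0 := by
  simp [eps, EuclideanSpace.single_apply]

lemma pRhoC_apply (n : ℕ) (j : Fin n) : pRhoC n j = 2 * n - 1 - 2 * (j : ℕ) := by
  rw [pRhoC, WithLp.ofLp_sum, Finset.sum_apply, Finset.sum_eq_single j]
  · simp [eps_apply]
  · intro i _ hne
    simp [eps_apply, hne, Ne.symm hne]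
  · simp

def fsucc {n : ℕ} (i : Fin n) : Fin n :=
  ⟨(i.val + 1) % n, Nat.mod_lt _ (Nat.lt_of_le_of_lt (Nat.zero_le _) i.isLt)⟩

lemma fsucc_val {n : ℕ} {i : Fin n} (h : i.val + 1 < n) : (fsucc i).val = i.val + 1 :=
  Nat.mod_eq_of_lt h

open scoped Classical in
def odds (n : ℕ) : Finset (Fin n) := univ.filter fun i => i.val % 2 = 1

lemma odds_mem {n : ℕ} {i : Fin n} : i ∈ odds n ↔ i.val % 2 = 1 := by
  simp [odds]

lemma odds_lt {n : ℕ} (hodd : Odd n) {i : Fin n} (hi : i ∈ odds n) : i.val + 1 < n := by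
  have h1 := odds_mem.mp hi
  have h2 := i.isLt
  obtain ⟨m, hm⟩ := hodd
  omega

open scoped Classical in
def cfun (n : ℕ) : EuclideanSpace ℝ (Fin n) → ℕ := fun α =>
  ∑ i ∈ odds n, ((if α = eps n i + eps n (fsucc i) then 2*n - 2 - 2*i.val else 0)
    + (if α = eps n i - eps n (fsucc i) then 1 else 0))

open scoped Classical in
lemma sum_ite_smul {n : ℕ} (S : Finset (EuclideanSpace ℝ (Fin n)))
    (u : EuclideanSpace ℝ (Fin n)) (hu : u ∈ S) (c : ℝ) :
    ∑ α ∈ S, (if α = u then c else 0) • α = c • u := by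
  rw [show (fun α => (if α = u then c else 0) • α) = fun α => (if α = u then c • u else 0) from
    funext fun α => by split_ifs with h <;> simp [h]]
  rw [Finset.sum_ite_eq' S u (fun _ => c • u)]
  simp [hu]

lemma part2 (n : ℕ) (hodd : Odd n) (hn : 1 < n) :
    pRhoC n - ((2 * (n : ℝ)) - 1) • eps n ⟨0, Nat.zero_lt_of_lt hn⟩
      = ∑ α ∈ CnShortPos n, ((cfun n α : ℝ)) • α := by
  classical
  have hmemp : ∀ i ∈ odds n, eps n i + eps n (fsucc i) ∈ CnShortPos n := by
    intro i hi
    exact mem_shortPos_iff.mpr ⟨i, fsucc i, by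
      rw [Fin.lt_def, fsucc_val (odds_lt hodd hi)]; omega, Or.inr rfl⟩
  have hmemm : ∀ i ∈ odds n, eps n i - eps n (fsucc i) ∈ CnShortPos n := by
    intro i hi
    exact mem_shortPos_iff.mpr ⟨i, fsucc i, by
      rw [Fin.lt_def, fsucc_val (odds_lt hodd hi)]; omega, Or.inl rfl⟩
  have hR : ∑ α ∈ CnShortPos n, ((cfun n α : ℝ)) • α
      = ∑ i ∈ odds n, (((2*n - 2 - 2*i.val : ℕ) : ℝ) • (eps n i + eps n (fsucc i))
          + (1:ℝ) • (eps n i - eps n (fsucc i))) := by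
    have hcast : ∀ α : EuclideanSpace ℝ (Fin n), ((cfun n α : ℕ):ℝ) = ∑ i ∈ odds n,
        ((if α = eps n i + eps n (fsucc i) then ((2*n - 2 - 2*i.val : ℕ):ℝ) else 0)
          + (if α = eps n i - eps n (fsucc i) then (1:ℝ) else 0)) := by
      intro α
      rw [cfun, Nat.cast_sum]
      refine Finset.sum_congr rfl fun i _ => ?_
      split_ifs <;> simp
    calc ∑ α ∈ CnShortPos n, ((cfun n α : ℝ)) • α
        = ∑ α ∈ CnShortPos n, ∑ i ∈ odds n,
            ((if α = eps n i + eps n (fsucc i) then ((2*n - 2 - 2*i.val : ℕ):ℝ) else 0) • α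
              + (if α = eps n i - eps n (fsucc i) then (1:ℝ) else 0) • α) := by
          refine Finset.sum_congr rfl fun α _ => ?_
          rw [hcast α, Finset.sum_smul]
          exact Finset.sum_congr rfl fun i _ => add_smul _ _ _
      _ = ∑ i ∈ odds n, ∑ α ∈ CnShortPos n,
            ((if α = eps n i + eps n (fsucc i) then ((2*n - 2 - 2*i.val : ℕ):ℝ) else 0) • α
              + (if α = eps n i - eps n (fsucc i) then (1:ℝ) else 0) • α) := Finset.sum_comm
      _ = ∑ i ∈ odds n, (((2*n - 2 - 2*i.val : ℕ) : ℝ) • (eps n i + eps n (fsucc i))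
          + (1:ℝ) • (eps n i - eps n (fsucc i))) := by
          refine Finset.sum_congr rfl fun i hi => ?_
          rw [Finset.sum_add_distrib, sum_ite_smul _ _ (hmemp i hi), sum_ite_smul _ _ (hmemm i hi)]
  rw [hR]
  ext j
  have hsum : (∑ i ∈ odds n, (((2*n - 2 - 2*i.val : ℕ) : ℝ) • (eps n i + eps n (fsucc i))
      + (1:ℝ) • (eps n i - eps n (fsucc i)))) j
      = ∑ i ∈ odds n, (((2*n - 2 - 2*i.val : ℕ) : ℝ) * (eps n i j + eps n (fsucc i) j)
      + (eps n i j - eps n (fsucc i) j)) := by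
    rw [WithLp.ofLp_sum, Finset.sum_apply]
    exact Finset.sum_congr rfl fun i _ => by simp [PiLp.add_apply, PiLp.sub_apply]; ring
  have hL : (pRhoC n - ((2 * (n : ℝ)) - 1) • eps n ⟨0, Nat.zero_lt_of_lt hn⟩) j
      = (2 * n - 1 - 2 * (j : ℕ)) - (2 * (n:ℝ) - 1) * (if j = ⟨0, Nat.zero_lt_of_lt hn⟩ then 1 else 0) := by
    simp [PiLp.sub_apply, PiLp.smul_apply, pRhoC_apply, eps_apply, smul_eq_mul]
  rw [hL, hsum]
  by_cases hj0 : j.val = 0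
  · have hj : j = ⟨0, Nat.zero_lt_of_lt hn⟩ := Fin.ext hj0
    rw [Finset.sum_eq_zero, if_pos hj]
    · rw [hj0]; push_cast; ring
    · intro i hi
      have h1 := odds_mem.mp hi
      have h2 := odds_lt hodd hi
      have e1 : eps n i j = 0 := by
        rw [eps_apply, if_neg]; intro h; rw [Fin.ext_iff] at h; omega
      have e2 : eps n (fsucc i) j = 0 := by
        rw [eps_apply, if_neg]; intro h; rw [Fin.ext_iff, fsucc_val h2] at h; omega
      rw [e1, e2]; ring
  · have hjne : ¬ (j = ⟨0, Nat.zero_lt_of_lt hn⟩) := by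
      intro h; rw [Fin.ext_iff] at h; exact hj0 h
    rw [if_neg hjne, mul_zero, sub_zero]
    rcases Nat.even_or_odd j.val with he | ho
    · -- j even, nonzero: the term i₀ with i₀.val = j.val - 1 contributes
      have hj1 : 1 ≤ j.val := by omega
      set i₀ : Fin n := ⟨j.val - 1, by omega⟩ with hi₀
      have hi₀mem : i₀ ∈ odds n := by
        rw [odds_mem]; simp only [hi₀]; obtain ⟨m, hm⟩ := he; omega
      have hi₀lt : i₀.val + 1 < n := odds_lt hodd hi₀mem
      rw [Finset.sum_eq_single_of_mem i₀ hi₀mem]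
      · have e1 : eps n i₀ j = 0 := by
          rw [eps_apply, if_neg]; intro h; rw [Fin.ext_iff] at h; simp [hi₀] at h; omega
        have e2 : eps n (fsucc i₀) j = 1 := by
          rw [eps_apply, if_pos]; rw [Fin.ext_iff, fsucc_val hi₀lt]; simp [hi₀]; omega
        rw [e1, e2]
        have hval : (i₀ : ℕ) = j.val - 1 := rfl
        rw [hval, Nat.cast_sub (by omega), Nat.cast_sub (by omega)]
        push_cast [Nat.cast_sub hj1]
        ring
      · intro i hi hne
        have h1 := odds_mem.mp hi
        have h2 := odds_lt hodd hi
        have e1 : eps n i j = 0 := by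
          rw [eps_apply, if_neg]; intro h; rw [Fin.ext_iff] at h
          obtain ⟨m, hm⟩ := he; omega
        have e2 : eps n (fsucc i) j = 0 := by
          rw [eps_apply, if_neg]; intro h; rw [Fin.ext_iff, fsucc_val h2] at h
          apply hne; rw [Fin.ext_iff]; simp [hi₀]; omega
        rw [e1, e2]; ring
    · -- j odd: the term i = j contributes
      have hjmem : j ∈ odds n := by rw [odds_mem]; obtain ⟨m, hm⟩ := ho; omega
      have hjlt : j.val + 1 < n := odds_lt hodd hjmem
      rw [Finset.sum_eq_single_of_mem j hjmem]
      · have e1 : eps n j j = 1 := by rw [eps_apply, if_pos rfl]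
        have e2 : eps n (fsucc j) j = 0 := by
          rw [eps_apply, if_neg]; intro h; rw [Fin.ext_iff, fsucc_val hjlt] at h; omega
        rw [e1, e2, Nat.cast_sub (by omega), Nat.cast_sub (by omega)]
        push_cast
        ring
      · intro i hi hne
        have h1 := odds_mem.mp hi
        have h2 := odds_lt hodd hi
        have e1 : eps n i j = 0 := by
          rw [eps_apply, if_neg]; intro h; exact hne (Fin.ext (Fin.ext_iff.mp h)).symm
        have e2 : eps n (fsucc i) j = 0 := by
          rw [eps_apply, if_neg]; intro h; rw [Fin.ext_iff, fsucc_val h2] at h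
          obtain ⟨m, hm⟩ := ho; omega
        rw [e1, e2]; ring

lemma part3 (n : ℕ) (hodd : Odd n) (hn : 1 < n) :
    ¬ ∃ Ψ ⊆ CnShortPos n,
        pRhoC n - ((2 * (n : ℝ)) - 1) • eps n ⟨0, Nat.zero_lt_of_lt hn⟩ = ∑ v ∈ Ψ, v := by
  classical
  rintro ⟨Ψ, hsub, hsum⟩
  set j₀ : Fin n := ⟨0, Nat.zero_lt_of_lt hn⟩ with hj₀
  set j₁ : Fin n := ⟨1, hn⟩ with hj₁
  have hv0 : (j₀ : ℕ) = 0 := rfl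
  have hv1 : (j₁ : ℕ) = 1 := rfl
  have happly : ∀ j : Fin n, (pRhoC n - ((2 * (n : ℝ)) - 1) • eps n j₀) j = ∑ v ∈ Ψ, v j := by
    intro j
    rw [hsum, WithLp.ofLp_sum, Finset.sum_apply]
  have h0 : ∑ v ∈ Ψ, v j₀ = 0 := by
    rw [← happly j₀]
    simp [PiLp.sub_apply, PiLp.smul_apply, pRhoC_apply, eps_apply, smul_eq_mul, hj₀]
  have hnonneg : ∀ α ∈ Ψ, (0:ℝ) ≤ α j₀ := by
    intro α hα
    rcases mem_shortPos_iff.mp (hsub hα) with ⟨p, q, hpq, (rfl | rfl)⟩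
    · have hq : q ≠ j₀ := by
        intro h; rw [Fin.ext_iff] at h; rw [Fin.lt_def] at hpq; simp [hj₀] at h; omega
      simp only [PiLp.sub_apply, eps_apply]
      split_ifs with h1 h2 <;> simp_all <;> norm_num
    · simp only [PiLp.add_apply, eps_apply]
      split_ifs <;> norm_num
  have hzero : ∀ α ∈ Ψ, α j₀ = 0 :=
    (Finset.sum_eq_zero_iff_of_nonneg hnonneg).mp h0
  have classify : ∀ α ∈ Ψ, α j₁ = 0 ∨ (α j₁ = 1 ∧ ∃ q : Fin n, 1 < q.val ∧
      (α = eps n j₁ - eps n q ∨ α = eps n j₁ + eps n q)) := by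
    intro α hα
    have hz := hzero α hα
    rcases mem_shortPos_iff.mp (hsub hα) with ⟨p, q, hpq, (rfl | rfl)⟩ <;>
      rw [Fin.lt_def] at hpq
    · have hp : p ≠ j₀ := by
        intro h
        rw [h] at hz
        have hq : q ≠ j₀ := by intro h2; rw [h2] at hpq; omega
        simp [PiLp.sub_apply, eps_apply, Ne.symm hq] at hz
      have hp1 : 1 ≤ p.val := by
        rcases Nat.eq_zero_or_pos p.val with h | h
        · exact absurd (Fin.ext h) hp
        · omega
      have hq2 : 1 < q.val := by omega
      have hqj₁ : j₁ ≠ q := by intro h; rw [Fin.ext_iff] at h; omega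
      have hpqne : p ≠ q := fun h => by rw [h] at hpq; omega
      by_cases hpj : j₁ = p
      · right
        constructor
        · simp [PiLp.sub_apply, eps_apply, hpj, hqj₁, hpqne]
        · exact ⟨q, hq2, Or.inl (by rw [hpj])⟩
      · left; simp [PiLp.sub_apply, eps_apply, hpj, hqj₁]
    · have hp : p ≠ j₀ := by
        intro h
        rw [h] at hz
        have hq : q ≠ j₀ := by intro h2; rw [h2] at hpq; omega
        simp [PiLp.add_apply, eps_apply, Ne.symm hq] at hz
      have hp1 : 1 ≤ p.val := by
        rcases Nat.eq_zero_or_pos p.val with h | h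
        · exact absurd (Fin.ext h) hp
        · omega
      have hq2 : 1 < q.val := by omega
      have hqj₁ : j₁ ≠ q := by intro h; rw [Fin.ext_iff] at h; omega
      have hpqne : p ≠ q := fun h => by rw [h] at hpq; omega
      by_cases hpj : j₁ = p
      · right
        constructor
        · simp [PiLp.add_apply, eps_apply, hpj, hqj₁, hpqne]
        · exact ⟨q, hq2, Or.inr (by rw [hpj])⟩
      · left; simp [PiLp.add_apply, eps_apply, hpj, hqj₁]
  have h1 : ∑ v ∈ Ψ, v j₁ = 2 * (n:ℝ) - 3 := by
    rw [← happly j₁]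
    have : j₁ ≠ j₀ := by intro h; rw [Fin.ext_iff] at h; simp [hj₀, hj₁] at h
    simp [PiLp.sub_apply, PiLp.smul_apply, pRhoC_apply, eps_apply, smul_eq_mul, this, hj₁]
    rw [if_neg (by simp [hj₀])]
    ring
  set Ψ₁ := Ψ.filter (fun α => α j₁ = 1) with hΨ₁
  have hcard : (Ψ₁.card : ℝ) = 2 * (n:ℝ) - 3 := by
    rw [← h1, ← Finset.sum_filter_add_sum_filter_not Ψ (fun α => α j₁ = 1) (fun v => v j₁)]
    have e1 : ∑ v ∈ Ψ₁, v j₁ = Ψ₁.card := by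
      rw [Finset.sum_congr rfl (fun v hv => (Finset.mem_filter.mp hv).2)]
      simp
      rfl
    have e2 : ∑ v ∈ Ψ.filter (fun α => ¬ (α j₁ = 1)), v j₁ = 0 := by
      refine Finset.sum_eq_zero fun v hv => ?_
      obtain ⟨hvΨ, hne⟩ := Finset.mem_filter.mp hv
      rcases classify v hvΨ with h | ⟨h, _⟩
      · exact h
      · exact absurd h hne
    rw [e1, e2, add_zero]
  set J := univ.filter (fun q : Fin n => 1 < q.val) with hJ
  have hJcard : J.card = n - 2 := by
    have h := Finset.card_filter_add_card_filter_not
      (s := (univ : Finset (Fin n))) (p := fun q : Fin n => 1 < q.val)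
    have h2 : univ.filter (fun q : Fin n => ¬ 1 < q.val) = {j₀, j₁} := by
      ext q
      simp only [Finset.mem_filter, Finset.mem_univ, true_and, Finset.mem_insert,
        Finset.mem_singleton, not_lt]
      constructor
      · intro hq
        rcases Nat.lt_or_ge q.val 1 with h | h
        · left; rw [Fin.ext_iff, hv0]; omega
        · right; rw [Fin.ext_iff, hv1]; omega
      · rintro (rfl | rfl) <;> omega
    have h3 : ({j₀, j₁} : Finset (Fin n)).card = 2 := by
      rw [Finset.card_insert_of_notMem (by simp [hj₀, hj₁, Fin.ext_iff]),
        Finset.card_singleton]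
    rw [h2, h3] at h
    simp only [Finset.card_univ, Fintype.card_fin] at h
    rw [hJ]
    omega
  have hsubQ : Ψ₁ ⊆ J.image (fun q => eps n j₁ - eps n q) ∪
      J.image (fun q => eps n j₁ + eps n q) := by
    intro α hα
    obtain ⟨hαΨ, hα1⟩ := Finset.mem_filter.mp hα
    rcases classify α hαΨ with h | ⟨_, q, hq, (rfl | rfl)⟩
    · rw [h] at hα1; norm_num at hα1
    · exact Finset.mem_union_left _ (Finset.mem_image.mpr ⟨q, by simp [hJ, hq], rfl⟩)
    · exact Finset.mem_union_right _ (Finset.mem_image.mpr ⟨q, by simp [hJ, hq], rfl⟩)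
  have hbound : Ψ₁.card ≤ 2 * (n - 2) := by
    calc Ψ₁.card ≤ _ := Finset.card_le_card hsubQ
      _ ≤ (J.image (fun q => eps n j₁ - eps n q)).card
          + (J.image (fun q => eps n j₁ + eps n q)).card := Finset.card_union_le _ _
      _ ≤ J.card + J.card := Nat.add_le_add (Finset.card_image_le) (Finset.card_image_le)
      _ = 2 * (n - 2) := by rw [hJcard]; ring
  have : (Ψ₁.card : ℝ) ≤ 2 * (n:ℝ) - 4 := by
    calc (Ψ₁.card : ℝ) ≤ ((2 * (n-2) : ℕ) : ℝ) := by exact_mod_cast hbound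
      _ = 2 * (n:ℝ) - 4 := by
          rw [Nat.cast_mul, Nat.cast_sub (by omega)]; push_cast; ring
  rw [hcard] at this
  linarith

section GeneralE
variable {E : Type*} [NormedAddCommGroup E] [InnerProductSpace ℝ E]

lemma norm_rsRefl (α v : E) : ‖rsRefl α v‖ = ‖v‖ := by
  by_cases hα : (inner ℝ α α : ℝ) = 0
  · have : α = 0 := inner_self_eq_zero.mp hα
    simp [rsRefl, this]
  · have hsq : ‖rsRefl α v‖^2 = ‖v‖^2 := by
    -- ‖v - c • α‖² = ‖v‖² - 2c⟪v,α⟫ + c²‖α‖²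
      rw [rsRefl, norm_sub_sq_real, real_inner_smul_right, norm_smul]
      have hαα : (inner ℝ α α : ℝ) = ‖α‖^2 := real_inner_self_eq_norm_sq α
      rw [mul_pow, Real.norm_eq_abs, sq_abs]
      rw [hαα] at hα ⊢
      field_simp
      ring
    nlinarith [norm_nonneg (rsRefl α v), norm_nonneg v, hsq]

lemma weyl_norm (Φ : Finset E) : ∀ g ∈ weylGroup Φ, ∀ v, ‖g v‖ = ‖v‖ := by
  intro g hg
  induction hg using Subgroup.closure_induction with
  | mem g hg =>
      obtain ⟨α, _, hgα⟩ := hg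
      intro v; rw [hgα v]; exact norm_rsRefl α v
  | one => intro v; rfl
  | mul g h _ _ ihg ihh =>
      intro v
      rw [show (g * h) v = g (h v) from rfl, ihg, ihh]
  | inv g hg ih =>
      intro v
      have h2 := ih (g⁻¹ v)
      rw [show g (g⁻¹ v) = v from g.apply_symm_apply v] at h2; exact h2.symm

lemma convexHull_orbit_bound (Φ : Finset E) (lam β : E)
    (hβ : β ∈ convexHull ℝ (weylOrbit Φ lam)) : ‖β‖ ≤ ‖lam‖ := by
  have horb : weylOrbit Φ lam ⊆ Metric.closedBall (0:E) ‖lam‖ := by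
    rintro x ⟨g, hg, rfl⟩
    rw [Metric.mem_closedBall, dist_zero_right]
    exact le_of_eq (weyl_norm Φ g hg lam)
  have := convexHull_min horb (convex_closedBall (0:E) ‖lam‖)
  have hb := this hβ
  rwa [Metric.mem_closedBall, dist_zero_right] at hb


end GeneralE

lemma rhoC_apply (n : ℕ) (j : Fin n) : rhoC n j = n - (j : ℕ) := by
  rw [rhoC, WithLp.ofLp_sum, Finset.sum_apply, Finset.sum_eq_single j]
  · simp [eps_apply]
  · intro i _ hne
    simp [eps_apply, hne, Ne.symm hne]
  · simp

lemma part4 (n : ℕ) (hn : 1 < n) (Φ : Finset (EuclideanSpace ℝ (Fin n))) :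
    ¬ isWeight Φ (pRhoC n - rhoC n)
        (((2 * (n : ℝ)) - 1) • eps n ⟨0, Nat.zero_lt_of_lt hn⟩ - rhoC n) := by
  rintro ⟨hhull, -⟩
  set lam := pRhoC n - rhoC n with hlam
  set β := ((2 * (n : ℝ)) - 1) • eps n ⟨0, Nat.zero_lt_of_lt hn⟩ - rhoC n with hβ
  have hle : ‖β‖ ≤ ‖lam‖ := convexHull_orbit_bound Φ lam β hhull
  have hlt : ‖lam‖ < ‖β‖ := by
    have hlamj : ∀ j : Fin n, lam j = (n:ℝ) - 1 - (j:ℕ) := by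
      intro j
      rw [hlam, PiLp.sub_apply, pRhoC_apply, rhoC_apply]; ring
    have hβj : ∀ j : Fin n, β j = (if j = (⟨0, Nat.zero_lt_of_lt hn⟩ : Fin n) then (2*(n:ℝ) - 1) else 0)
        - ((n:ℝ) - (j:ℕ)) := by
      intro j
      rw [hβ, PiLp.sub_apply, PiLp.smul_apply, rhoC_apply, eps_apply, smul_eq_mul]
      split_ifs <;> ring
    rw [EuclideanSpace.norm_eq, EuclideanSpace.norm_eq]
    apply Real.sqrt_lt_sqrt (by positivity)
    apply Finset.sum_lt_sum
    · intro j _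
      rw [hlamj j, hβj j, Real.norm_eq_abs, Real.norm_eq_abs, sq_abs, sq_abs]
      by_cases h : j = (⟨0, Nat.zero_lt_of_lt hn⟩ : Fin n)
      · rw [if_pos h]
        have : (j:ℕ) = 0 := by rw [h]
        rw [this]; push_cast; ring_nf; exact le_refl _
      · rw [if_neg h]
        have hj1 : 1 ≤ (j:ℕ) := by
          rcases Nat.eq_zero_or_pos (j:ℕ) with h0 | h0
          · exact absurd (Fin.ext h0) h
          · omega
        have hjn : (j:ℕ) < n := j.isLt
        have c1 : (1:ℝ) ≤ (j:ℕ) := by exact_mod_cast hj1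
        have c2 : ((j:ℕ):ℝ) ≤ (n:ℝ) - 1 := by
          have : (j:ℕ) + 1 ≤ n := hjn
          have := (Nat.cast_le (α := ℝ)).mpr this
          push_cast at this; linarith
        nlinarith
    · refine ⟨⟨1, hn⟩, Finset.mem_univ _, ?_⟩
      rw [hlamj, hβj, Real.norm_eq_abs, Real.norm_eq_abs, sq_abs, sq_abs]
      rw [if_neg (by intro h; rw [Fin.ext_iff] at h; simp at h)]
      have : ((⟨1, hn⟩ : Fin n) : ℕ) = 1 := rfl
      rw [this]
      have hn3 : (2:ℝ) ≤ (n:ℝ) := by exact_mod_cast hn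
      push_cast
      nlinarith
  linarith

/-- for the pair `(A_{2n-1}, Cₙ)` with `n` odd, `p(ρ)` is not in the root
lattice of `Cₙ`; for `μ = (2n-1)ϖ₁`, the difference `p(ρ) - μ` is a non-negative
integral combination of positive short roots, yet it is not a sum of *distinct*
positive short roots (i.e. not of the form `p(ρ) - ρ₀ - sum(Ψ)` with `β = μ - ρ₀`),
and `V₀(p(ρ)-ρ₀)_{μ-ρ₀} = 0`. -/
theorem stmt18 (n : ℕ) (hodd : Odd n) (hn : 1 < n) :
    pRhoC n ∉ AddSubgroup.closure ((CnRoots n : Finset (EuclideanSpace ℝ (Fin n))) :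
        Set (EuclideanSpace ℝ (Fin n))) ∧
    (∃ c : EuclideanSpace ℝ (Fin n) → ℕ,
        pRhoC n - ((2 * (n : ℝ)) - 1) • eps n ⟨0, by omega⟩
          = ∑ α ∈ CnShortPos n, (c α : ℝ) • α) ∧
    (¬ ∃ Ψ ⊆ CnShortPos n,
        pRhoC n - ((2 * (n : ℝ)) - 1) • eps n ⟨0, by omega⟩ = ∑ v ∈ Ψ, v) ∧
    ¬ isWeight (CnRoots n) (pRhoC n - rhoC n)
        (((2 * (n : ℝ)) - 1) • eps n ⟨0, by omega⟩ - rhoC n) := by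
  exact ⟨part1 n hodd, ⟨cfun n, part2 n hodd hn⟩, part3 n hodd hn, part4 n hn _⟩

end
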